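/- Let A = [[W, H], [J, K]] be a block matrix with W an invertible r×r block. Then rank A = r if and only if K = J * W⁻¹ * H. -/

import Mathlib

open Matrix

lemma aux_finrank_ker {𝕜 : Type*} [Field 𝕜] (r p : ℕ) :
    Module.finrank 𝕜
      (LinearMap.ker (LinearMap.funLeft 𝕜 𝕜 (Sum.inr : Fin p → Fin r ⊕ Fin p))) = r := by
  have hs : Function.Surjective (LinearMap.funLeft 𝕜 𝕜 (Sum.inr : Fin p → Fin r ⊕ Fin p)) :=
    LinearMap.funLeft_surjective_of_injective _ _ _ Sum.inr_injective
  have h := LinearMap.finrank_range_add_finrank_ker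
    (LinearMap.funLeft 𝕜 𝕜 (Sum.inr : Fin p → Fin r ⊕ Fin p))
  rw [LinearMap.range_eq_top.mpr hs, finrank_top] at h
  simp [Module.finrank_pi] at h
  omega

lemma aux_mem_range {𝕜 : Type*} [Field 𝕜] {r p q : ℕ} (S : Matrix (Fin p) (Fin q) 𝕜)
    (f : Fin r ⊕ Fin p → 𝕜) (hf : f ∘ Sum.inr = 0) :
    f ∈ LinearMap.range (fromBlocks (1 : Matrix (Fin r) (Fin r) 𝕜) 0 0 S).mulVecLin := by
  refine ⟨Sum.elim (f ∘ Sum.inl) 0, ?_⟩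
  rw [mulVecLin_apply, fromBlocks_mulVec]
  simp only [Sum.elim_comp_inl, Sum.elim_comp_inr, one_mulVec, zero_mulVec, mulVec_zero,
    add_zero, zero_add]
  conv_rhs => rw [← Sum.elim_comp_inl_inr f, hf]

lemma aux_rank_iff {𝕜 : Type*} [Field 𝕜] {r p q : ℕ} (S : Matrix (Fin p) (Fin q) 𝕜) :
    (fromBlocks (1 : Matrix (Fin r) (Fin r) 𝕜) 0 0 S).rank = r ↔ S = 0 := by
  set U := LinearMap.ker (LinearMap.funLeft 𝕜 𝕜 (Sum.inr : Fin p → Fin r ⊕ Fin p)) with hU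
  have hUr : Module.finrank 𝕜 U = r := aux_finrank_ker r p
  have hle : U ≤ LinearMap.range (fromBlocks (1 : Matrix (Fin r) (Fin r) 𝕜) 0 0 S).mulVecLin := by
    intro f hf
    exact aux_mem_range S f (LinearMap.mem_ker.mp hf)
  constructor
  · intro hrank
    have heq : U = LinearMap.range (fromBlocks (1 : Matrix (Fin r) (Fin r) 𝕜) 0 0 S).mulVecLin :=
      Submodule.eq_of_le_of_finrank_eq hle (by rw [hUr]; exact hrank.symm)
    ext i j
    have hmem : (fromBlocks (1 : Matrix (Fin r) (Fin r) 𝕜) 0 0 S).mulVecLin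
        (Sum.elim 0 (Pi.single j 1)) ∈ U := by
      rw [heq]; exact LinearMap.mem_range_self _ _
    have h2 := congrFun (LinearMap.mem_ker.mp hmem) i
    simp only [mulVecLin_apply, fromBlocks_mulVec, Sum.elim_comp_inl, Sum.elim_comp_inr,
      mulVec_zero, zero_mulVec, zero_add, add_zero, LinearMap.funLeft_apply,
      Function.comp_apply, Sum.elim_inr, Pi.zero_apply] at h2
    simpa [mulVec_single] using h2
  · rintro rfl
    have hge : LinearMap.range
        (fromBlocks (1 : Matrix (Fin r) (Fin r) 𝕜) 0 0 (0 : Matrix (Fin p) (Fin q) 𝕜)).mulVecLin ≤ U := by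
      rintro f ⟨v, rfl⟩
      rw [LinearMap.mem_ker]
      ext j
      simp [mulVecLin_apply, fromBlocks_mulVec]
    have heq : LinearMap.range
        (fromBlocks (1 : Matrix (Fin r) (Fin r) 𝕜) 0 0 (0 : Matrix (Fin p) (Fin q) 𝕜)).mulVecLin = U :=
      le_antisymm hge hle
    rw [Matrix.rank, heq, hUr]

theorem stmt6 {𝕜 : Type*} [Field 𝕜] {r p q : ℕ}
    (W : Matrix (Fin r) (Fin r) 𝕜) (H : Matrix (Fin r) (Fin q) 𝕜)
    (J : Matrix (Fin p) (Fin r) 𝕜) (K : Matrix (Fin p) (Fin q) 𝕜)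
    (hW : IsUnit W) :
    (Matrix.fromBlocks W H J K).rank = r ↔ K = J * W⁻¹ * H := by
  obtain ⟨iW⟩ := hW.nonempty_invertible
  have hWinv : W⁻¹ = ⅟ W := (invOf_eq_nonsing_inv W).symm
  have hfact := fromBlocks_eq_of_invertible₁₁ W H J K
  have hdet1 : IsUnit (fromBlocks (1 : Matrix (Fin r) (Fin r) 𝕜) 0 (J * ⅟ W) 1).det := by
    rw [det_fromBlocks_zero₁₂]; simp
  have hdet2 : IsUnit (fromBlocks (1 : Matrix (Fin r) (Fin r) 𝕜) (⅟ W * H) 0 1).det := by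
    rw [det_fromBlocks_zero₂₁]; simp
  have hdet3 : IsUnit (fromBlocks W 0 0 (1 : Matrix (Fin p) (Fin p) 𝕜)).det := by
    rw [det_fromBlocks_zero₂₁, det_one, mul_one]
    exact W.isUnit_det_of_invertible
  have hrank : (fromBlocks W H J K).rank
      = (fromBlocks (1 : Matrix (Fin r) (Fin r) 𝕜) 0 0 (K - J * ⅟ W * H)).rank := by
    rw [hfact, rank_mul_eq_left_of_isUnit_det _ _ hdet2, rank_mul_eq_right_of_isUnit_det _ _ hdet1]
    have h3 : fromBlocks W 0 0 (K - J * ⅟ W * H)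
        = @HMul.hMul _ _ _ Matrix.instHMulOfFintypeOfMulOfAddCommMonoid
          (fromBlocks W 0 0 (1 : Matrix (Fin p) (Fin p) 𝕜)) (fromBlocks 1 0 0 (K - J * ⅟ W * H)) := by
      rw [fromBlocks_multiply]; simp
    rw [h3, rank_mul_eq_right_of_isUnit_det _ _ hdet3]
  rw [hrank, aux_rank_iff, hWinv, sub_eq_zero, eq_comm]
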